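/- Combinatorial form of the Main Theorem (Theorem 1.5, via Lemma 4.1): let d ≥ 1 be an integer. Then ε(X) > d if and only if for every pair of functions e, e' : V → ℕ with Σ_{i∈V} e i = Σ_{i∈V} e' i = d and with e − e' ∈ Λ_X (i.e. the partitional multidegrees e and e' are equivalent), one has e − e' ∈ Λ_X^0. (This is exactly the combinatorial content of the statement 'X admits a natural d-th Abel map iff ε(X) > d'.) -/

import Mathlib

open Finset

variable {V : Type*}

/-- The multidegree of a divisor `D` on the nodal curve with dual multigraph `m`:
`(deg D) j = ∑ i, (D i - D j) * m i j`. -/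
def mdeg [Fintype V] (m : V → V → ℕ) (D : V → ℤ) : V → ℤ :=
  fun j => ∑ i, (D i - D j) * (m i j : ℤ)

/-- `k_Z`: the number of nodes where the subcurve `Z` meets its complementary curve. -/
def kdeg [Fintype V] [DecidableEq V] (m : V → V → ℕ) (Z : Finset V) : ℕ :=
  ∑ i ∈ Z, ∑ j ∈ Zᶜ, m i j

/-- The pair `(i, j)` (with `m i j > 0`) corresponds to a separating node:
`m i j = 1` and the edge `{i, j}` is a bridge of `G`. -/
def Separating (m : V → V → ℕ) (G : SimpleGraph V) (i j : V) : Prop :=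
  m i j = 1 ∧ G.IsBridge s(i, j)

/-- A tail: a nonempty proper subcurve meeting its complement in a single node. -/
def IsTail [Fintype V] [DecidableEq V] (m : V → V → ℕ) (Q : Finset V) : Prop :=
  Q.Nonempty ∧ Q ≠ Finset.univ ∧ kdeg m Q = 1

/-- A divisor is a sum of tails if `D = c·1_V + ∑ h a_h · 1_{Q_h}` with the `Q_h` tails. -/
def SumOfTails [Fintype V] [DecidableEq V] (m : V → V → ℕ) (D : V → ℤ) : Prop :=
  ∃ (c : ℤ) (k : ℕ) (a : Fin k → ℤ) (Q : Fin k → Finset V),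
    (∀ h, IsTail m (Q h)) ∧
    ∀ i, D i = c + ∑ h, a h * (if i ∈ Q h then 1 else 0)

/-- `Λ_X`: the group of multidegrees of twisters, i.e. the image of `mdeg`. -/
def Lambda [Fintype V] (m : V → V → ℕ) : Set (V → ℤ) := Set.range (mdeg m)

/-- `Λ_X^0`: multidegrees of sums of tails. -/
def Lambda0 [Fintype V] [DecidableEq V] (m : V → V → ℕ) : Set (V → ℤ) :=
  {t | ∃ D, SumOfTails m D ∧ mdeg m D = t}

/-- The essential connectivity `ε(X)`: the infimum of `k_Z` over nonempty proper `Z ⊆ V`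
such that some pair `(i,j)` with `i ∈ Z`, `j ∉ Z`, `m i j > 0` is not separating. -/
noncomputable def eps [Fintype V] [DecidableEq V] (m : V → V → ℕ) (G : SimpleGraph V) : ℕ∞ :=
  sInf ((fun Z : Finset V => (kdeg m Z : ℕ∞)) ''
    {Z | Z.Nonempty ∧ Z ≠ Finset.univ ∧
      ∃ i ∈ Z, ∃ j, j ∉ Z ∧ 0 < m i j ∧ ¬ Separating m G i j})

/-! ### Auxiliary lemmas -/

lemma separating_symm {m : V → V → ℕ} (hsym : ∀ i j, m i j = m j i) {G : SimpleGraph V}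
    {i j : V} (h : Separating m G i j) : Separating m G j i := by
  refine ⟨by rw [hsym]; exact h.1, ?_⟩
  have := h.2
  rwa [Sym2.eq_swap] at this

lemma exists_crossing_adj [DecidableEq V] {H : SimpleGraph V} {Q : Finset V} :
    ∀ {x y : V}, H.Walk x y → x ∈ Q → y ∉ Q → ∃ v ∈ Q, ∃ w, w ∉ Q ∧ H.Adj v w := by
  intro x y p
  induction p with
  | nil => intro hx hy; exact absurd hx hy
  | @cons a b c hab p ih =>
    intro ha hc
    by_cases hb : b ∈ Q
    · exact ih hb hc
    · exact ⟨a, ha, b, hb, hab⟩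

lemma kdeg_eq_sum_product [Fintype V] [DecidableEq V] (m : V → V → ℕ) (Q : Finset V) :
    kdeg m Q = ∑ p ∈ Q ×ˢ Qᶜ, m p.1 p.2 := by
  rw [kdeg, Finset.sum_product]

lemma mdeg_zero_pointwise [Fintype V] {m : V → V → ℕ} (hsym : ∀ i j, m i j = m j i)
    {E : V → ℤ} (hE : ∀ j, mdeg m E j = 0) {a b : V} (hm : 0 < m a b) : E a = E b := by
  have key : ∑ j, ∑ i, (E i - E j) ^ 2 * (m i j : ℤ) = 0 := by
    have h1 : ∑ j, ∑ i, (E i - E j) * E j * (m i j : ℤ) = 0 := by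
      refine Finset.sum_eq_zero fun j _ => ?_
      have := hE j
      simp only [mdeg] at this
      calc ∑ i, (E i - E j) * E j * (m i j : ℤ)
          = (∑ i, (E i - E j) * (m i j : ℤ)) * E j := by
            rw [Finset.sum_mul]; exact Finset.sum_congr rfl fun i _ => by ring
        _ = 0 := by rw [this, zero_mul]
    have h2 : ∑ j, ∑ i, (E i - E j) * E i * (m i j : ℤ) = 0 := by
      rw [Finset.sum_comm]
      refine Finset.sum_eq_zero fun i _ => ?_
      have := hE i
      simp only [mdeg] at this
      calc ∑ j, (E i - E j) * E i * (m i j : ℤ)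
          = -((∑ j, (E j - E i) * (m j i : ℤ)) * E i) := by
            rw [Finset.sum_mul, ← Finset.sum_neg_distrib]
            exact Finset.sum_congr rfl fun j _ => by rw [hsym i j]; ring
        _ = 0 := by rw [this, zero_mul, neg_zero]
    calc ∑ j, ∑ i, (E i - E j) ^ 2 * (m i j : ℤ)
        = (∑ j, ∑ i, (E i - E j) * E i * (m i j : ℤ))
          - ∑ j, ∑ i, (E i - E j) * E j * (m i j : ℤ) := by
          rw [← Finset.sum_sub_distrib]
          refine Finset.sum_congr rfl fun j _ => ?_
          rw [← Finset.sum_sub_distrib]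
          exact Finset.sum_congr rfl fun i _ => by ring
      _ = 0 := by rw [h1, h2, sub_zero]
  have hnn : ∀ j ∈ (univ : Finset V), 0 ≤ ∑ i, (E i - E j) ^ 2 * (m i j : ℤ) :=
    fun j _ => Finset.sum_nonneg fun i _ => mul_nonneg (sq_nonneg _) (Int.natCast_nonneg _)
  have h3 := (Finset.sum_eq_zero_iff_of_nonneg hnn).mp key b (mem_univ b)
  have hnn2 : ∀ i ∈ (univ : Finset V), 0 ≤ (E i - E b) ^ 2 * (m i b : ℤ) :=
    fun i _ => mul_nonneg (sq_nonneg _) (Int.natCast_nonneg _)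
  have h4 := (Finset.sum_eq_zero_iff_of_nonneg hnn2).mp h3 a (mem_univ a)
  have hm' : (m a b : ℤ) ≠ 0 := by exact_mod_cast hm.ne'
  have := (mul_eq_zero.mp h4).resolve_right hm'
  have := sq_eq_zero_iff.mp this
  linarith

lemma mdeg_sub [Fintype V] (m : V → V → ℕ) (D E : V → ℤ) (j : V) :
    mdeg m (fun v => D v - E v) j = mdeg m D j - mdeg m E j := by
  simp only [mdeg, ← Finset.sum_sub_distrib]
  exact Finset.sum_congr rfl fun i _ => by ring

lemma tail_crossing_separating [Fintype V] [DecidableEq V] {m : V → V → ℕ}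
    {G : SimpleGraph V} (hG : ∀ i j, G.Adj i j ↔ i ≠ j ∧ 0 < m i j)
    {Q : Finset V} (hQ : IsTail m Q)
    {a b : V} (ha : a ∈ Q) (hb : b ∉ Q) (hm : 0 < m a b) : Separating m G a b := by
  have hab : a ≠ b := fun h => hb (h ▸ ha)
  have hle : m a b ≤ kdeg m Q := by
    rw [kdeg_eq_sum_product]
    have hmem : (a, b) ∈ Q ×ˢ Qᶜ := by simp [Finset.mem_product, ha, hb]
    exact Finset.single_le_sum (f := fun p : V × V => m p.1 p.2)
      (fun p _ => Nat.zero_le _) hmem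
  have hm1 : m a b = 1 := by have := hQ.2.2; omega
  refine ⟨hm1, ?_⟩
  rw [SimpleGraph.isBridge_iff]
  rintro ⟨p⟩
  obtain ⟨v, hv, w, hw, hvw⟩ := exists_crossing_adj p ha hb
  have hGvw : G.Adj v w ∧ ¬ (SimpleGraph.fromEdgeSet {s(a, b)}).Adj v w := hvw
  have hvw_ne : s(v, w) ≠ s(a, b) := by
    intro h
    exact hGvw.2 ((SimpleGraph.fromEdgeSet_adj _).mpr ⟨by rw [h]; rfl, hGvw.1.ne⟩)
  have hmvw : 0 < m v w := ((hG v w).mp hGvw.1).2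
  have hpairne : (v, w) ≠ (a, b) := by
    intro h; apply hvw_ne; simp only [Prod.mk.injEq] at h; rw [h.1, h.2]
  have h2 : 2 ≤ kdeg m Q := by
    rw [kdeg_eq_sum_product]
    have hsub : ({(v, w), (a, b)} : Finset (V × V)) ⊆ Q ×ˢ Qᶜ := by
      intro p hp
      rcases Finset.mem_insert.mp hp with h | h
      · subst h; simp [Finset.mem_product, hv, hw]
      · rw [Finset.mem_singleton.mp h]; simp [Finset.mem_product, ha, hb]
    calc 2 ≤ m v w + m a b := by omega
      _ = ∑ p ∈ ({(v, w), (a, b)} : Finset (V × V)), m p.1 p.2 := by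
          rw [Finset.sum_insert (by simpa using hpairne), Finset.sum_singleton]
      _ ≤ ∑ p ∈ Q ×ˢ Qᶜ, m p.1 p.2 := Finset.sum_le_sum_of_subset hsub
  have := hQ.2.2; omega

lemma sumOfTails_const_across [Fintype V] [DecidableEq V] {m : V → V → ℕ}
    (hsym : ∀ i j, m i j = m j i)
    {G : SimpleGraph V} (hG : ∀ i j, G.Adj i j ↔ i ≠ j ∧ 0 < m i j)
    {D : V → ℤ} (hD : SumOfTails m D) {a b : V}
    (hm : 0 < m a b) (hns : ¬ Separating m G a b) : D a = D b := by
  obtain ⟨c, k, co, Q, htails, hform⟩ := hD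
  rw [hform a, hform b]
  congr 1
  refine Finset.sum_congr rfl fun h _ => ?_
  have : (a ∈ Q h) ↔ (b ∈ Q h) := by
    constructor
    · intro haQ
      by_contra hbQ
      exact hns (tail_crossing_separating hG (htails h) haQ hbQ hm)
    · intro hbQ
      by_contra haQ
      have hmba : 0 < m b a := by rw [hsym b a]; exact hm
      exact hns (separating_symm hsym (tail_crossing_separating hG (htails h) hbQ haQ hmba))
  simp only [this]

lemma sumOfTails_const' [Fintype V] [DecidableEq V] (m : V → V → ℕ) (c : ℤ) :
    SumOfTails m (fun _ => c) :=
  ⟨c, 0, Fin.elim0, Fin.elim0, fun h => h.elim0, fun i => by simp⟩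

lemma sumOfTails_add_tail [Fintype V] [DecidableEq V] {m : V → V → ℕ} {D : V → ℤ}
    (hD : SumOfTails m D) {Q : Finset V} (hQ : IsTail m Q) (a : ℤ) :
    SumOfTails m (fun v => D v + a * (if v ∈ Q then 1 else 0)) := by
  obtain ⟨c, k, co, T, htails, hform⟩ := hD
  refine ⟨c, k + 1, Fin.snoc co a, Fin.snoc T Q, ?_, ?_⟩
  · intro h
    refine Fin.lastCases ?_ ?_ h
    · simpa [Fin.snoc_last] using hQ
    · intro h'; simpa [Fin.snoc_castSucc] using htails h'
  · intro i
    rw [Fin.sum_univ_castSucc]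
    simp only [Fin.snoc_last, Fin.snoc_castSucc]
    rw [hform i]; ring

lemma eq_of_adj_const {G : SimpleGraph V} {D : V → ℤ}
    (h : ∀ v w, G.Adj v w → D v = D w) {x y : V} (hr : G.Reachable x y) : D x = D y := by
  obtain ⟨p⟩ := hr
  induction p with
  | nil => rfl
  | cons hadj p ih => exact (h _ _ hadj).trans ih

lemma sumOfTails_of_const_edges [Fintype V] [DecidableEq V] [Nonempty V]
    {m : V → V → ℕ} {G : SimpleGraph V} (hG : ∀ i j, G.Adj i j ↔ i ≠ j ∧ 0 < m i j)
    (hconn : G.Connected) {D : V → ℤ} (h : ∀ v w, 0 < m v w → D v = D w) :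
    SumOfTails m D := by
  have v0 : V := Classical.arbitrary V
  have hc : ∀ v, D v = D v0 := fun v =>
    eq_of_adj_const (fun a b hab => h a b ((hG a b).mp hab).2) (hconn.preconnected v v0)
  rw [funext hc]
  exact sumOfTails_const' m (D v0)

lemma exists_tail_of_separating [Fintype V] [DecidableEq V] {m : V → V → ℕ}
    (hdiag : ∀ i, m i i = 0)
    {G : SimpleGraph V} (hG : ∀ i j, G.Adj i j ↔ i ≠ j ∧ 0 < m i j)
    {i j : V} (hsep : Separating m G i j) :
    ∃ Q : Finset V, IsTail m Q ∧ i ∈ Q ∧ j ∉ Q ∧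
      ∀ v w, v ∈ Q → w ∉ Q → 0 < m v w → v = i ∧ w = j := by
  classical
  set H := G \ SimpleGraph.fromEdgeSet {s(i, j)} with hH
  set Q : Finset V := univ.filter (fun v => H.Reachable i v) with hQdef
  have hiQ : i ∈ Q := by
    simp only [hQdef, mem_filter, mem_univ, true_and]; exact SimpleGraph.Reachable.refl i
  have hjQ : j ∉ Q := by
    simp only [hQdef, mem_filter, mem_univ, true_and]
    exact (SimpleGraph.isBridge_iff.mp hsep.2)
  have hcross : ∀ v w, v ∈ Q → w ∉ Q → 0 < m v w → v = i ∧ w = j := by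
    intro v w hv hw hm
    have hne : v ≠ w := fun h => by rw [h] at hm; rw [hdiag w] at hm; exact absurd hm (lt_irrefl 0)
    have hadj : G.Adj v w := (hG v w).mpr ⟨hne, hm⟩
    simp only [hQdef, mem_filter, mem_univ, true_and] at hv hw
    by_cases hedge : s(v, w) = s(i, j)
    · rcases Sym2.eq_iff.mp hedge with ⟨rfl, rfl⟩ | ⟨rfl, rfl⟩
      · exact ⟨rfl, rfl⟩
      · exact absurd hv (SimpleGraph.isBridge_iff.mp hsep.2)
    · have hHadj : H.Adj v w := by
        refine ⟨hadj, ?_⟩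
        intro hF
        exact hedge ((SimpleGraph.fromEdgeSet_adj _).mp hF).1
      exact absurd (hv.trans hHadj.reachable) hw
  refine ⟨Q, ⟨⟨i, hiQ⟩, fun h => hjQ (h ▸ mem_univ j), ?_⟩, hiQ, hjQ, hcross⟩
  rw [kdeg_eq_sum_product]
  have hmem : (i, j) ∈ Q ×ˢ Qᶜ := by simp [Finset.mem_product, hiQ, hjQ]
  rw [Finset.sum_eq_single_of_mem (i, j) hmem]
  · exact hsep.1
  · intro p hp hne
    rw [Finset.mem_product, Finset.mem_compl] at hp
    by_contra hmp
    have := hcross p.1 p.2 hp.1 hp.2 (Nat.pos_of_ne_zero hmp)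
    exact hne (Prod.ext this.1 this.2)

/-- Key decomposition lemma: a divisor constant across all non-separating
positive pairs is a sum of tails. -/
lemma sumOfTails_of_const_nonsep [Fintype V] [DecidableEq V] [Nonempty V]
    {m : V → V → ℕ} (hsym : ∀ i j, m i j = m j i) (hdiag : ∀ i, m i i = 0)
    {G : SimpleGraph V} (hG : ∀ i j, G.Adj i j ↔ i ≠ j ∧ 0 < m i j)
    (hconn : G.Connected) :
    ∀ (n : ℕ) (D : V → ℤ),
      (univ.filter (fun p : V × V => 0 < m p.1 p.2 ∧ D p.1 ≠ D p.2)).card ≤ n →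
      (∀ v w, 0 < m v w → ¬ Separating m G v w → D v = D w) →
      SumOfTails m D := by
  intro n
  induction n with
  | zero =>
    intro D hcard hyp
    apply sumOfTails_of_const_edges hG hconn
    intro v w hm
    by_contra hne
    have hmem : (v, w) ∈ univ.filter (fun p : V × V => 0 < m p.1 p.2 ∧ D p.1 ≠ D p.2) := by
      simp only [mem_filter, mem_univ, true_and]; exact ⟨hm, hne⟩
    have := Finset.card_pos.mpr ⟨_, hmem⟩
    omega
  | succ n ih =>
    intro D hcard hyp
    by_cases hall : ∀ v w, 0 < m v w → D v = D w
    · exact sumOfTails_of_const_edges hG hconn hall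
    push_neg at hall
    obtain ⟨i, j, hm, hne⟩ := hall
    have hsep : Separating m G i j := by
      by_contra hns
      exact hne (hyp i j hm hns)
    obtain ⟨Q, hQtail, hiQ, hjQ, hcross⟩ := exists_tail_of_separating hdiag hG hsep
    set a : ℤ := D i - D j with ha
    set D' : V → ℤ := fun v => D v - a * (if v ∈ Q then 1 else 0) with hD'
    have hD'i : D' i = D j := by simp only [hD', if_pos hiQ]; ring
    have hD'j : D' j = D j := by simp only [hD', if_neg hjQ]; ring
    have hmemeq : ∀ v w, 0 < m v w → (v, w) ≠ (i, j) → (v, w) ≠ (j, i) →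
        ((v ∈ Q) ↔ (w ∈ Q)) := by
      intro v w hmvw h1 h2
      constructor
      · intro hv; by_contra hw
        obtain ⟨rfl, rfl⟩ := hcross v w hv hw hmvw
        exact h1 rfl
      · intro hw; by_contra hv
        have hmwv : 0 < m w v := by rw [hsym w v]; exact hmvw
        obtain ⟨rfl, rfl⟩ := hcross w v hw hv hmwv
        exact h2 rfl
    have hD'const : ∀ v w, 0 < m v w → ¬ Separating m G v w → D' v = D' w := by
      intro v w hmvw hns
      have h1 : (v, w) ≠ (i, j) := by
        intro h; simp only [Prod.mk.injEq] at h; obtain ⟨rfl, rfl⟩ := h; exact hns hsep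
      have h2 : (v, w) ≠ (j, i) := by
        intro h; simp only [Prod.mk.injEq] at h; obtain ⟨rfl, rfl⟩ := h
        exact hns (separating_symm hsym hsep)
      have hQe := hmemeq v w hmvw h1 h2
      simp only [hD']
      rw [hyp v w hmvw hns, if_congr hQe rfl rfl]
    have hsub : univ.filter (fun p : V × V => 0 < m p.1 p.2 ∧ D' p.1 ≠ D' p.2) ⊂
        univ.filter (fun p : V × V => 0 < m p.1 p.2 ∧ D p.1 ≠ D p.2) := by
      refine ⟨?_, ?_⟩
      · intro p hp
        simp only [mem_filter, mem_univ, true_and] at hp ⊢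
        obtain ⟨hmp, hdp⟩ := hp
        refine ⟨hmp, ?_⟩
        obtain ⟨v, w⟩ := p
        by_cases h1 : (v, w) = (i, j)
        · exfalso
          simp only [Prod.mk.injEq] at h1; obtain ⟨rfl, rfl⟩ := h1
          exact hdp (hD'i.trans hD'j.symm)
        by_cases h2 : (v, w) = (j, i)
        · exfalso
          simp only [Prod.mk.injEq] at h2; obtain ⟨rfl, rfl⟩ := h2
          exact hdp (hD'j.trans hD'i.symm)
        have hQe := hmemeq v w hmp h1 h2
        intro hDeq
        apply hdp
        simp only [hD']
        rw [hDeq, if_congr hQe rfl rfl]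
      · intro hsub'
        have hmemij : (i, j) ∈
            univ.filter (fun p : V × V => 0 < m p.1 p.2 ∧ D p.1 ≠ D p.2) := by
          simp only [mem_filter, mem_univ, true_and]; exact ⟨hm, hne⟩
        have := hsub' hmemij
        simp only [mem_filter, mem_univ, true_and] at this
        exact this.2 (hD'i.trans hD'j.symm)
    have hcard' := Finset.card_lt_card hsub
    have hst := ih D' (by omega) hD'const
    have hDeq : D = fun v => D' v + a * (if v ∈ Q then 1 else 0) := by
      funext v; simp only [hD']; ring
    rw [hDeq]
    exact sumOfTails_add_tail hst hQtail a

/-- Combinatorial form of the Main Theorem (Theorem 1.5, via Lemma 4.1):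
`ε(X) > d` iff any two equivalent partitional multidegrees of total degree `d`
differ by the multidegree of a sum of tails. -/
theorem main_theorem_combinatorial [Fintype V] [DecidableEq V] [Nonempty V]
    (m : V → V → ℕ) (hsym : ∀ i j, m i j = m j i) (hdiag : ∀ i, m i i = 0)
    (G : SimpleGraph V) (hG : ∀ i j, G.Adj i j ↔ i ≠ j ∧ 0 < m i j)
    (hconn : G.Connected) (d : ℕ) (hd : 1 ≤ d) :
    (d : ℕ∞) < eps m G ↔
      ∀ e e' : V → ℕ, (∑ i, e i) = d → (∑ i, e' i) = d →
        (fun i => (e i : ℤ) - (e' i : ℤ)) ∈ Lambda m →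
        (fun i => (e i : ℤ) - (e' i : ℤ)) ∈ Lambda0 m := by
  constructor
  · -- forward direction
    intro hlt e e' he he' hlam
    obtain ⟨D0, hD0⟩ := hlam
    refine ⟨D0, ?_, hD0⟩
    apply sumOfTails_of_const_nonsep hsym hdiag hG hconn _ D0 le_rfl
    have main : ∀ v w, 0 < m v w → ¬ Separating m G v w → D0 w < D0 v → False := by
      intro v w hm hns hlt'
      set Z : Finset V := univ.filter (fun u => D0 v ≤ D0 u) with hZdef
      have hvZ : v ∈ Z := by simp [hZdef]
      have hwZ : w ∉ Z := by simp only [hZdef, mem_filter, mem_univ, true_and]; omega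
      -- eps ≤ kdeg m Z
      have heps_le : eps m G ≤ (kdeg m Z : ℕ∞) := by
        apply sInf_le
        exact ⟨Z, ⟨⟨v, hvZ⟩, fun h => hwZ (h ▸ mem_univ w), v, hvZ, w, hwZ, hm, hns⟩, rfl⟩
      -- kdeg m Z ≤ d
      set T1 : ℤ := ∑ u ∈ Z, ∑ i ∈ Z, (D0 i - D0 u) * (m i u : ℤ) with hT1def
      set T2 : ℤ := ∑ u ∈ Z, ∑ i ∈ Zᶜ, (D0 i - D0 u) * (m i u : ℤ) with hT2def
      have hsplit : ∑ u ∈ Z, mdeg m D0 u = T1 + T2 := by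
        rw [hT1def, hT2def, ← Finset.sum_add_distrib]
        refine Finset.sum_congr rfl fun u _ => ?_
        rw [mdeg, Finset.sum_add_sum_compl]
      have hT1zero : T1 = 0 := by
        have h2 : T1 = ∑ a ∈ Z, ∑ b ∈ Z, (D0 a - D0 b) * (m a b : ℤ) := Finset.sum_comm
        have h3 : T1 + T1 = 0 := by
          nth_rewrite 2 [h2]
          rw [← Finset.sum_add_distrib]
          refine Finset.sum_eq_zero fun u _ => ?_
          rw [← Finset.sum_add_distrib]
          refine Finset.sum_eq_zero fun i _ => ?_
          rw [hsym i u]; ring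
        omega
      have hT2le : T2 ≤ -(kdeg m Z : ℤ) := by
        have hterm : ∀ u ∈ Z, ∀ i ∈ Zᶜ, (D0 i - D0 u) * (m i u : ℤ) ≤ -(m i u : ℤ) := by
          intro u hu i hi
          have h1 : D0 v ≤ D0 u := by
            simp only [hZdef, mem_filter, mem_univ, true_and] at hu; exact hu
          have h2 : ¬ D0 v ≤ D0 i := by
            have := Finset.mem_compl.mp hi
            simp only [hZdef, mem_filter, mem_univ, true_and] at this; exact this
          have h3 : D0 i - D0 u ≤ -1 := by omega
          calc (D0 i - D0 u) * (m i u : ℤ) ≤ (-1) * (m i u : ℤ) :=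
                mul_le_mul_of_nonneg_right h3 (Int.natCast_nonneg _)
            _ = -(m i u : ℤ) := by ring
        have hkcast : (∑ u ∈ Z, ∑ i ∈ Zᶜ, (m i u : ℤ)) = (kdeg m Z : ℤ) := by
          rw [kdeg]
          push_cast
          refine Finset.sum_congr rfl fun u _ => Finset.sum_congr rfl fun i _ => ?_
          rw [hsym i u]
        calc T2 ≤ ∑ u ∈ Z, ∑ i ∈ Zᶜ, -(m i u : ℤ) :=
              Finset.sum_le_sum fun u hu => Finset.sum_le_sum fun i hi => hterm u hu i hi
          _ = -(∑ u ∈ Z, ∑ i ∈ Zᶜ, (m i u : ℤ)) := by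
              rw [← Finset.sum_neg_distrib]
              exact Finset.sum_congr rfl fun u _ => by rw [Finset.sum_neg_distrib]
          _ = -(kdeg m Z : ℤ) := by rw [hkcast]
      have hlow : -(d : ℤ) ≤ ∑ u ∈ Z, mdeg m D0 u := by
        have heq : ∑ u ∈ Z, mdeg m D0 u = ∑ u ∈ Z, ((e u : ℤ) - (e' u : ℤ)) :=
          Finset.sum_congr rfl fun u _ => by rw [hD0]
        have h1 : ∑ u ∈ Z, ((e u : ℤ) - (e' u : ℤ)) ≥ ∑ u ∈ Z, (-(e' u : ℤ)) :=
          Finset.sum_le_sum fun u _ => by have : (0:ℤ) ≤ (e u : ℤ) := Int.natCast_nonneg _; omega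
        have h2 : ∑ u ∈ Z, (e' u : ℤ) ≤ ∑ u, (e' u : ℤ) :=
          Finset.sum_le_sum_of_subset_of_nonneg (subset_univ Z)
            (fun u _ _ => Int.natCast_nonneg _)
        have h3 : (∑ u, (e' u : ℤ)) = (d : ℤ) := by
          rw [← Nat.cast_sum, he']
        rw [heq]
        have h4 : ∑ u ∈ Z, (-(e' u : ℤ)) = -∑ u ∈ Z, (e' u : ℤ) := by
          rw [Finset.sum_neg_distrib]
        omega
      have hkd : kdeg m Z ≤ d := by
        have : -(d : ℤ) ≤ T1 + T2 := hsplit ▸ hlow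
        rw [hT1zero, zero_add] at this
        have : (kdeg m Z : ℤ) ≤ (d : ℤ) := by omega
        exact_mod_cast this
      have hfin : (kdeg m Z : ℕ∞) ≤ (d : ℕ∞) := by exact_mod_cast hkd
      exact absurd (lt_of_lt_of_le hlt (le_trans heps_le hfin)) (lt_irrefl _)
    intro v w hm hns
    rcases lt_trichotomy (D0 v) (D0 w) with h | h | h
    · exfalso
      have hmwv : 0 < m w v := by rw [hsym w v]; exact hm
      have hnswv : ¬ Separating m G w v := fun hs => hns (separating_symm hsym hs)
      exact main w v hmwv hnswv h
    · exact h
    · exact absurd (main v w hm hns h) not_false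
  · -- backward direction
    intro hcond
    by_contra hnlt
    push_neg at hnlt
    -- obtain a witness Z with kdeg ≤ d
    have hex : ∃ Z : Finset V, (Z.Nonempty ∧ Z ≠ Finset.univ ∧
        ∃ i ∈ Z, ∃ j, j ∉ Z ∧ 0 < m i j ∧ ¬ Separating m G i j) ∧ kdeg m Z ≤ d := by
      by_contra hno
      push_neg at hno
      have : ((d : ℕ) + 1 : ℕ∞) ≤ eps m G := by
        apply le_sInf
        rintro b ⟨Z, hZ, rfl⟩
        have := hno Z hZ
        show ((d : ℕ) + 1 : ℕ∞) ≤ (kdeg m Z : ℕ∞)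
        exact_mod_cast Nat.succ_le_of_lt this
      have hd1 : (d : ℕ∞) < ((d : ℕ) + 1 : ℕ∞) := by
        exact_mod_cast Nat.lt_succ_self d
      exact absurd (lt_of_lt_of_le hd1 this) (not_lt_of_ge hnlt)
    obtain ⟨Z, ⟨hZne, hZuniv, i0, hi0, j0, hj0, hm0, hns0⟩, hkd⟩ := hex
    set oneZ : V → ℤ := fun v => if v ∈ Z then 1 else 0 with honeZ
    -- value of mdeg of the indicator
    have hfval : ∀ v, mdeg m oneZ v =
        (if v ∈ Z then -(∑ i ∈ Zᶜ, (m i v : ℤ)) else ∑ i ∈ Z, (m i v : ℤ)) := by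
      intro v
      by_cases hv : v ∈ Z
      · rw [if_pos hv]
        rw [mdeg]
        have : ∀ i, ((oneZ i) - oneZ v) * (m i v : ℤ) =
            if i ∈ Zᶜ then -(m i v : ℤ) else 0 := by
          intro i
          simp only [honeZ, if_pos hv, Finset.mem_compl]
          by_cases hi : i ∈ Z <;> simp [hi]
        rw [Finset.sum_congr rfl fun i _ => this i]
        rw [Finset.sum_ite_mem, Finset.univ_inter, Finset.sum_neg_distrib]
      · rw [if_neg hv]
        rw [mdeg]
        have : ∀ i, ((oneZ i) - oneZ v) * (m i v : ℤ) =
            if i ∈ Z then (m i v : ℤ) else 0 := by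
          intro i
          simp only [honeZ, if_neg hv]
          by_cases hi : i ∈ Z <;> simp [hi]
        rw [Finset.sum_congr rfl fun i _ => this i]
        rw [Finset.sum_ite_mem, Finset.univ_inter]
    -- build e and e'
    set v0 : V := Classical.arbitrary V with hv0
    set e : V → ℕ := fun v => (if v ∈ Z then 0 else ∑ i ∈ Z, m i v) +
      (if v = v0 then d - kdeg m Z else 0) with he
    set e' : V → ℕ := fun v => (if v ∈ Z then ∑ i ∈ Zᶜ, m i v else 0) +
      (if v = v0 then d - kdeg m Z else 0) with he'
    have hdiff : ∀ v, (e v : ℤ) - (e' v : ℤ) = mdeg m oneZ v := by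
      intro v
      rw [hfval v, he, he']
      by_cases hv : v ∈ Z <;> simp [hv] <;> push_cast <;> ring
    have hslack : ∑ v, (if v = v0 then d - kdeg m Z else 0) = d - kdeg m Z := by
      rw [Finset.sum_ite_eq' univ v0 (fun _ => d - kdeg m Z), if_pos (mem_univ v0)]
    have hesum : ∑ v, e v = d := by
      rw [he]
      simp only []
      rw [Finset.sum_add_distrib, hslack]
      have h1 : ∑ v, (if v ∈ Z then 0 else ∑ i ∈ Z, m i v) = kdeg m Z := by
        have : ∀ v, (if v ∈ Z then 0 else ∑ i ∈ Z, m i v) =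
            if v ∈ Zᶜ then ∑ i ∈ Z, m i v else 0 := by
          intro v; by_cases hv : v ∈ Z <;> simp [hv]
        rw [Finset.sum_congr rfl fun v _ => this v, Finset.sum_ite_mem, Finset.univ_inter]
        rw [kdeg, Finset.sum_comm]
      rw [h1]
      omega
    have he'sum : ∑ v, e' v = d := by
      rw [he']
      simp only []
      rw [Finset.sum_add_distrib, hslack]
      have h1 : ∑ v, (if v ∈ Z then ∑ i ∈ Zᶜ, m i v else 0) = kdeg m Z := by
        rw [Finset.sum_ite_mem, Finset.univ_inter]
        rw [kdeg]
        refine Finset.sum_congr rfl fun v hv => Finset.sum_congr rfl fun i hi => ?_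
        rw [hsym i v]
      rw [h1]
      omega
    have hlam : (fun i => (e i : ℤ) - (e' i : ℤ)) ∈ Lambda m :=
      ⟨oneZ, funext fun v => (hdiff v).symm⟩
    obtain ⟨D, hDst, hDmdeg⟩ := hcond e e' hesum he'sum hlam
    -- D - oneZ has zero multidegree
    have hEzero : ∀ j, mdeg m (fun v => D v - oneZ v) j = 0 := by
      intro j
      rw [mdeg_sub]
      have h1 : mdeg m D j = (e j : ℤ) - (e' j : ℤ) := by rw [hDmdeg]
      rw [h1, hdiff j, sub_self]
    have hEconst := mdeg_zero_pointwise hsym hEzero hm0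
    have hDconst := sumOfTails_const_across hsym hG hDst hm0 hns0
    simp only [honeZ, if_pos hi0, if_neg hj0] at hEconst
    omega
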